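/- Let n ≥ 1 and K ⊆ {1,…,n}, and set K^∨ = {1,…,n} ∖ K. Let w₀ be the permutation of ℤ with w₀(x) = −x for |x| ≤ n and w₀(x) = x for |x| > n. Then the permutation (w_{K^∨})⁻¹ · w₀ · w_K maps {1,…,n} onto {1,…,n}; that is, w₀ w_K and w_{K^∨} lie in the same left coset of the subgroup W_J = {σ : σ(−x) = −σ(x) for all x, σ(x) = x for |x| > n, and σ({1,…,n}) = {1,…,n}}. -/

import Mathlib

/-- The signed permutation `s_i` of `ℤ`, swapping `i ↔ i+1` and `-i ↔ -(i+1)`. -/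
def sPerm (i : ℤ) : Equiv.Perm ℤ :=
  Equiv.swap i (i + 1) * Equiv.swap (-i) (-(i + 1))

/-- The permutation `t` of `ℤ`, swapping `n ↔ -n`. -/
def tPerm (n : ℕ) : Equiv.Perm ℤ :=
  Equiv.swap (n : ℤ) (-(n : ℤ))

/-- `c_k = s_k s_{k+1} ⋯ s_{n-1} t`. -/
def cPerm (n k : ℕ) : Equiv.Perm ℤ :=
  (((List.range (n - k)).map (fun j => sPerm ((k : ℤ) + (j : ℤ)))).prod) * tPerm n

/-- `w_K`: product of the `c_k`, `k ∈ K`, in decreasing order of `k`. -/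
def wPerm (n : ℕ) (K : Finset ℕ) : Equiv.Perm ℤ :=
  (((K.sort (· ≤ ·)).reverse).map (cPerm n)).prod
/-- The longest element `w₀`: `x ↦ -x` for `|x| ≤ n`, identity elsewhere. -/
def w0Perm (n : ℕ) : Equiv.Perm ℤ where
  toFun x := if x.natAbs ≤ n then -x else x
  invFun x := if x.natAbs ≤ n then -x else x
  left_inv x := by
    by_cases h : x.natAbs ≤ n
    · simp [h, Int.natAbs_neg]
    · simp [h]
  right_inv x := by
    by_cases h : x.natAbs ≤ n
    · simp [h, Int.natAbs_neg]
    · simp [h]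

lemma sPerm_apply (i x : ℤ) (hi : 1 ≤ i) :
    sPerm i x = if x = i then i + 1 else if x = i + 1 then i
      else if x = -i then -(i + 1) else if x = -(i + 1) then -i else x := by
  unfold sPerm
  simp only [Equiv.Perm.mul_apply, Equiv.swap_apply_def]
  split_ifs <;> omega

lemma tPerm_apply (n : ℕ) (x : ℤ) :
    tPerm n x = if x = (n:ℤ) then -(n:ℤ) else if x = -(n:ℤ) then (n:ℤ) else x := by
  unfold tPerm
  rw [Equiv.swap_apply_def]

def prodS (a : ℤ) (m : ℕ) : Equiv.Perm ℤ :=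
  ((List.range m).map (fun j => sPerm (a + (j : ℤ)))).prod

lemma cPerm_eq (n k : ℕ) : cPerm n k = prodS k (n - k) * tPerm n := rfl

lemma prodS_succ (a : ℤ) (m : ℕ) : prodS a (m + 1) = prodS a m * sPerm (a + m) := by
  unfold prodS
  rw [List.range_succ]
  simp

lemma prodS_apply (a : ℤ) (ha : 1 ≤ a) : ∀ (m : ℕ) (x : ℤ), 1 ≤ x →
    prodS a m x = if x = a + m then a else if a ≤ x ∧ x < a + m then x + 1 else x := by
  intro m
  induction m with
  | zero =>
    intro x hx
    have : prodS a 0 x = x := by simp [prodS]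
    rw [this]
    have h0 : ((0 : ℕ) : ℤ) = 0 := rfl
    rw [h0]
    split_ifs <;> omega
  | succ m ih =>
    intro x hx
    have hm : ((m + 1 : ℕ) : ℤ) = (m : ℤ) + 1 := by push_cast; ring
    rw [prodS_succ, Equiv.Perm.mul_apply, sPerm_apply (a + m) x (by omega), hm]
    by_cases h1 : x = a + (m : ℤ)
    · rw [if_pos h1, ih (a + m + 1) (by omega)]
      split_ifs <;> omega
    · rw [if_neg h1]
      by_cases h2 : x = a + (m : ℤ) + 1
      · rw [if_pos h2, ih (a + m) (by omega)]
        split_ifs <;> omega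
      · rw [if_neg h2, if_neg (by omega), if_neg (by omega), ih x hx]
        split_ifs <;> omega

lemma sPerm_neg (i : ℤ) (hi : 1 ≤ i) (x : ℤ) : sPerm i (-x) = -(sPerm i x) := by
  rw [sPerm_apply i _ hi, sPerm_apply i x hi]
  split_ifs <;> omega

lemma tPerm_neg (n : ℕ) (x : ℤ) : tPerm n (-x) = -(tPerm n x) := by
  unfold tPerm
  rw [Equiv.swap_apply_def, Equiv.swap_apply_def]
  split_ifs <;> omega

lemma prodS_neg (a : ℤ) (ha : 1 ≤ a) : ∀ (m : ℕ) (x : ℤ),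
    prodS a m (-x) = -(prodS a m x) := by
  intro m
  induction m with
  | zero => intro x; simp [prodS]
  | succ m ih =>
    intro x
    rw [prodS_succ, Equiv.Perm.mul_apply, Equiv.Perm.mul_apply,
      sPerm_neg (a + m) (by omega), ih]

lemma cPerm_neg (n k : ℕ) (hk1 : 1 ≤ k) (x : ℤ) : cPerm n k (-x) = -(cPerm n k x) := by
  rw [cPerm_eq, Equiv.Perm.mul_apply, Equiv.Perm.mul_apply, tPerm_neg,
    prodS_neg k (by exact_mod_cast hk1)]

lemma cPerm_apply (n k : ℕ) (hk1 : 1 ≤ k) (hkn : k ≤ n) (x : ℤ) (hx1 : 1 ≤ x)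
    (hxn : x ≤ (n : ℤ)) :
    cPerm n k x = if x = (n : ℤ) then -(k : ℤ)
      else if (k : ℤ) ≤ x ∧ x < (n : ℤ) then x + 1 else x := by
  have hk1' : (1 : ℤ) ≤ (k : ℤ) := by exact_mod_cast hk1
  have hcast : ((n - k : ℕ) : ℤ) = (n : ℤ) - (k : ℤ) := by
    have := Int.ofNat_sub hkn
    exact_mod_cast this
  rw [cPerm_eq, Equiv.Perm.mul_apply, tPerm_apply]
  by_cases hxe : x = (n : ℤ)
  · rw [if_pos hxe, if_pos hxe]
    have : -(n : ℤ) = -((k : ℤ) + ((n - k : ℕ) : ℤ)) := by rw [hcast]; ring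
    rw [this, prodS_neg k hk1' (n - k), prodS_apply k hk1' (n - k) _ (by omega)]
    rw [if_pos rfl]
  · rw [if_neg hxe, if_neg (by omega), prodS_apply k hk1' (n - k) x hx1, hcast]
    rw [if_neg (by omega)]
    split_ifs <;> omega

lemma cPerm_fix (n k : ℕ) (hk1 : 1 ≤ k) (hkn : k ≤ n) (j : ℕ) (hj1 : 1 ≤ j) (hjk : j < k) :
    cPerm n k (-(j : ℤ)) = -(j : ℤ) := by
  rw [cPerm_neg n k hk1, cPerm_apply n k hk1 hkn (j : ℤ) (by exact_mod_cast hj1) (by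
    have : j ≤ n := by omega
    exact_mod_cast this)]
  rw [if_neg (by omega), if_neg (by omega)]

lemma wList_image (n : ℕ) (hn : 1 ≤ n) : ∀ (r : List ℕ), r.Pairwise (· > ·) →
    (∀ k ∈ r, 1 ≤ k ∧ k ≤ n) →
    (⇑((r.map (cPerm n)).prod)) '' Set.Icc (1 : ℤ) (n : ℤ)
      = {x : ℤ | (1 ≤ x ∧ x ≤ (n : ℤ) ∧ ∀ j ∈ r, (j : ℤ) ≠ x) ∨ ∃ j ∈ r, (j : ℤ) = -x} := by
  intro r
  induction r with
  | nil =>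
    intro _ _
    simp only [List.map_nil, List.prod_nil, List.not_mem_nil, IsEmpty.forall_iff,
      implies_true, and_true, false_and, exists_false, or_false]
    ext x
    simp [Set.mem_Icc]
  | cons k r' ih =>
    intro hpw hbd
    have hlt : ∀ j ∈ r', j < k := by
      intro j hj
      exact (List.pairwise_cons.mp hpw).1 j hj
    have hpw' := (List.pairwise_cons.mp hpw).2
    have hbd' : ∀ j ∈ r', 1 ≤ j ∧ j ≤ n := fun j hj => hbd j (List.mem_cons_of_mem _ hj)
    have hk1 : 1 ≤ k := (hbd k (List.mem_cons_self)).1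
    have hkn : k ≤ n := (hbd k (List.mem_cons_self)).2
    rw [List.map_cons, List.prod_cons, Equiv.Perm.coe_mul, Set.image_comp,
      ih hpw' hbd']
    ext y
    simp only [Set.mem_image, Set.mem_setOf_eq]
    constructor
    · rintro ⟨x, hx, rfl⟩
      rcases hx with ⟨hx1, hxn, hne⟩ | ⟨j, hj, hjx⟩
      · rw [cPerm_apply n k hk1 hkn x hx1 hxn]
        split_ifs with h h2
        · right
          exact ⟨k, List.mem_cons_self, by ring⟩
        · left
          refine ⟨by omega, by omega, ?_⟩
          intro j hj
          rcases List.mem_cons.mp hj with rfl | hj'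
          · omega
          · have := hlt j hj'
            omega
        · left
          refine ⟨hx1, hxn, ?_⟩
          intro j hj
          rcases List.mem_cons.mp hj with rfl | hj'
          · omega
          · exact hne j hj'
      · have hxj : x = -(j : ℤ) := by omega
        have h1j := (hbd' j hj).1
        have hfix : cPerm n k x = x := by
          rw [hxj]
          exact cPerm_fix n k hk1 hkn j h1j (hlt j hj)
        rw [hfix]
        right
        exact ⟨j, List.mem_cons_of_mem _ hj, hjx⟩
    · intro hy
      rcases hy with ⟨hy1, hyn, hne⟩ | ⟨j, hj, hjy⟩
      · have hky : (k : ℤ) ≠ y := hne k (List.mem_cons_self)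
        by_cases hyk : y < (k : ℤ)
        · refine ⟨y, Or.inl ⟨hy1, hyn, fun j hj => hne j (List.mem_cons_of_mem _ hj)⟩, ?_⟩
          rw [cPerm_apply n k hk1 hkn y hy1 hyn]
          rw [if_neg (by omega), if_neg (by omega)]
        · refine ⟨y - 1, Or.inl ⟨by omega, by omega, ?_⟩, ?_⟩
          · intro j hj
            have := hlt j hj
            omega
          · rw [cPerm_apply n k hk1 hkn (y - 1) (by omega) (by omega)]
            rw [if_neg (by omega), if_pos (by omega)]
            ring
      · rcases List.mem_cons.mp hj with heq | hj'
        · subst heq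
          refine ⟨(n : ℤ), Or.inl ⟨by exact_mod_cast hn, le_refl _, ?_⟩, ?_⟩
          · intro i hi
            have := hlt i hi
            omega
          · rw [cPerm_apply n j hk1 hkn (n : ℤ) (by exact_mod_cast hn) le_rfl, if_pos rfl]
            omega
        · refine ⟨y, Or.inr ⟨j, hj', hjy⟩, ?_⟩
          have hyj : y = -(j : ℤ) := by omega
          rw [hyj]
          exact cPerm_fix n k hk1 hkn j (hbd' j hj').1 (hlt j hj')

lemma wPerm_image (n : ℕ) (hn : 1 ≤ n) (K : Finset ℕ) (hK : K ⊆ Finset.Icc 1 n) :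
    (⇑(wPerm n K)) '' Set.Icc (1 : ℤ) (n : ℤ)
      = {x : ℤ | (1 ≤ x ∧ x ≤ (n : ℤ) ∧ ∀ j ∈ K, (j : ℤ) ≠ x) ∨ ∃ j ∈ K, (j : ℤ) = -x} := by
  unfold wPerm
  rw [wList_image n hn _ ?pw ?bd]
  · ext x
    simp only [Set.mem_setOf_eq, List.mem_reverse, Finset.mem_sort]
  case pw =>
    rw [List.pairwise_reverse]
    exact K.sortedLT_sort.pairwise
  case bd =>
    intro k hk
    have hk' : k ∈ K := by
      rw [List.mem_reverse, Finset.mem_sort] at hk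
      exact hk
    have := hK hk'
    rw [Finset.mem_Icc] at this
    exact this

lemma w0_apply (n : ℕ) (x : ℤ) : w0Perm n x = if x.natAbs ≤ n then -x else x := rfl

theorem stmt4 (n : ℕ) (hn : 1 ≤ n) (K : Finset ℕ) (hK : K ⊆ Finset.Icc 1 n) :
    (fun x => ((wPerm n (Finset.Icc 1 n \ K))⁻¹ * w0Perm n * wPerm n K) x) ''
        Set.Icc (1 : ℤ) (n : ℤ)
      = Set.Icc (1 : ℤ) (n : ℤ) := by
  set KC := Finset.Icc 1 n \ K with hKC
  have hKC_sub : KC ⊆ Finset.Icc 1 n := Finset.sdiff_subset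
  have hfun : (fun x => ((wPerm n KC)⁻¹ * w0Perm n * wPerm n K) x)
      = ⇑(wPerm n KC)⁻¹ ∘ ⇑(w0Perm n) ∘ ⇑(wPerm n K) := rfl
  rw [hfun, Set.image_comp, Set.image_comp, wPerm_image n hn K hK]
  have hmid : (⇑(w0Perm n)) ''
      {x : ℤ | (1 ≤ x ∧ x ≤ (n : ℤ) ∧ ∀ j ∈ K, (j : ℤ) ≠ x) ∨ ∃ j ∈ K, (j : ℤ) = -x}
      = {x : ℤ | (1 ≤ x ∧ x ≤ (n : ℤ) ∧ ∀ j ∈ KC, (j : ℤ) ≠ x) ∨ ∃ j ∈ KC, (j : ℤ) = -x} := by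
    ext y
    simp only [Set.mem_image, Set.mem_setOf_eq]
    constructor
    · rintro ⟨x, hx, rfl⟩
      rcases hx with ⟨h1, h2, hne⟩ | ⟨j, hj, hjx⟩
      · rw [w0_apply, if_pos (by omega)]
        right
        refine ⟨x.toNat, ?_, by omega⟩
        rw [hKC, Finset.mem_sdiff, Finset.mem_Icc]
        refine ⟨⟨by omega, by omega⟩, ?_⟩
        intro hmem
        exact hne x.toNat hmem (by omega)
      · have hj' := hK hj
        rw [Finset.mem_Icc] at hj'
        rw [w0_apply, if_pos (by omega)]
        left
        refine ⟨by omega, by omega, ?_⟩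
        intro i hi
        rw [hKC, Finset.mem_sdiff] at hi
        intro heq
        have : i = j := by omega
        exact hi.2 (this ▸ hj)
    · intro hy
      rcases hy with ⟨h1, h2, hne⟩ | ⟨j, hj, hjy⟩
      · have hyK : y.toNat ∈ K := by
          by_contra hcon
          have : y.toNat ∈ KC := by
            rw [hKC, Finset.mem_sdiff, Finset.mem_Icc]
            exact ⟨⟨by omega, by omega⟩, hcon⟩
          exact hne y.toNat this (by omega)
        refine ⟨-y, Or.inr ⟨y.toNat, hyK, by omega⟩, ?_⟩
        rw [w0_apply, if_pos (by omega)]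
        omega
      · rw [hKC, Finset.mem_sdiff, Finset.mem_Icc] at hj
        refine ⟨-y, Or.inl ⟨by omega, by omega, ?_⟩, ?_⟩
        · intro i hi heq
          have : i = j := by omega
          exact hj.2 (this ▸ hi)
        · rw [w0_apply, if_pos (by omega)]
          omega
  rw [hmid, ← wPerm_image n hn KC hKC_sub, ← Set.image_comp]
  have : ⇑(wPerm n KC)⁻¹ ∘ ⇑(wPerm n KC) = id := by
    funext x
    simp
  rw [this, Set.image_id]
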